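/- Let s_*^1 = (s_0^1, s_1^1, ...) and s_* = (s_0, s_1, ...) be partitions such that s_*^1 is conjugate-majorized by s_* and |s^1| ≤ |s|, where s = (s_1, s_2, ...) and s^1 = (s_1^1, s_2^1, ...). Then for all i ≥ 0, s_i − s_i^1 ≥ 1 − ⌊√(|s_*^1| + 1)⌋, where |s_*^1| = s_0^1 + s_1^1 + ⋯. -/

import Mathlib

/-- An infinite weakly decreasing sequence of nonnegative integers, almost all zero. -/
def IsPartition (p : ℕ → ℕ) : Prop :=
  (∀ i j, i ≤ j → p j ≤ p i) ∧ ∃ N, ∀ i, N ≤ i → p i = 0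

/-- `conjPart p k` is the `(k+1)`-st entry of the conjugate partition of `p`,
where `p i` denotes the `(i+1)`-st entry of `p`; i.e. `#{i : p_i ≥ k+1}`. -/
noncomputable def conjPart (p : ℕ → ℕ) (k : ℕ) : ℕ :=
  Nat.card {i : ℕ | k + 1 ≤ p i}

/-- Sum of all entries of an (almost all zero) sequence. -/
noncomputable def psum (p : ℕ → ℕ) : ℕ := ∑ᶠ i, p i

/-- The tail `(p_1, p_2, …)` of a starred partition `p_* = (p_0, p_1, …)`. -/
def ptail (p : ℕ → ℕ) : ℕ → ℕ := fun i => p (i + 1)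

/-- `CMaj s r` : the starred partition `s_*` is conjugate-majorized by `r_*`
(written `s_* ∠ r_*`): `r_0 = s_0 + 1` and `r_i = s_i + 1` for all
`0 ≤ i ≤ g`, where `g = max {i : r_i > s_i}`. -/
def CMaj (s r : ℕ → ℕ) : Prop :=
  r 0 = s 0 + 1 ∧ ∀ i ≤ sSup {j | s j < r j}, r i = s i + 1

/-- STATEMENT 5: if `s_*^1 ∠ s_*` and `|s^1| ≤ |s|` (tails), then
`s_i − s_i^1 ≥ 1 − ⌊√(|s_*^1| + 1)⌋` for all `i ≥ 0`, where `|s_*^1|` is the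
sum of all entries of `s_*^1` including the index-0 entry. -/
theorem cmaj_lower_bound_sqrt (s1 s : ℕ → ℕ) (hs1 : IsPartition s1)
    (hs : IsPartition s) (h : CMaj s1 s)
    (hle : psum (ptail s1) ≤ psum (ptail s)) :
    ∀ i, 1 - (Nat.sqrt (psum s1 + 1) : ℤ) ≤ (s i : ℤ) - (s1 i : ℤ) := by
  intro i
  obtain ⟨hmono1, N1, hN1⟩ := hs1
  obtain ⟨hmono, N2, hN2⟩ := hs
  set g := sSup {j | s1 j < s j} with hgdef
  have hsq1 : 1 ≤ Nat.sqrt (psum s1 + 1) := Nat.le_sqrt.mpr (by omega)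
  rcases le_or_gt i g with hig | hig
  · have hi := h.2 i hig
    have : (Nat.sqrt (psum s1 + 1) : ℤ) ≥ 1 := by exact_mod_cast hsq1
    rw [hi]; push_cast; omega
  -- now i > g
  have hb : BddAbove {j | s1 j < s j} := by
    refine ⟨N1 + N2, fun j hj => ?_⟩
    by_contra hc
    push_neg at hc
    have h1 : s j = 0 := hN2 j (by omega)
    simp only [Set.mem_setOf_eq, h1] at hj; omega
  have hgt : ∀ j, g < j → s j ≤ s1 j := by
    intro j hj
    by_contra hc; push_neg at hc
    have : j ≤ g := le_csSup hb hc
    omega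
  have hsi : s i ≤ s1 i := hgt i hig
  set M := N1 + N2 + i + 1 with hM
  have hgM : g + 1 < M := by
    have : s i ≤ s1 i := hsi
    omega
  -- psum identities
  have hp1 : psum s1 = ∑ j ∈ Finset.range (M + 1), s1 j := by
    apply finsum_eq_finset_sum_of_support_subset
    intro j hj
    simp only [Function.mem_support] at hj
    simp only [Finset.coe_range, Set.mem_Iio]
    by_contra hc
    exact hj (hN1 j (by omega))
  have hpt1 : psum (ptail s1) = ∑ j ∈ Finset.range M, s1 (j + 1) := by
    apply finsum_eq_finset_sum_of_support_subset
    intro j hj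
    simp only [Function.mem_support, ptail] at hj
    simp only [Finset.coe_range, Set.mem_Iio]
    by_contra hc
    exact hj (hN1 (j + 1) (by omega))
  have hpt : psum (ptail s) = ∑ j ∈ Finset.range M, s (j + 1) := by
    apply finsum_eq_finset_sum_of_support_subset
    intro j hj
    simp only [Function.mem_support, ptail] at hj
    simp only [Finset.coe_range, Set.mem_Iio]
    by_contra hc
    exact hj (hN2 (j + 1) (by omega))
  -- key: s1 i - s i ≤ g
  have hsum : ∑ j ∈ Finset.range M, (s1 (j+1) : ℤ) ≤ ∑ j ∈ Finset.range M, (s (j+1) : ℤ) := by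
    rw [hpt1, hpt] at hle
    exact_mod_cast hle
  have hsplit : Finset.range M = Finset.range g ∪ Finset.Ico g M :=
    ((funext Finset.range_eq_Ico : Finset.range = Finset.Ico 0) ▸ (Finset.Ico_union_Ico_eq_Ico (Nat.zero_le g) (by omega)).symm)
  have hdisj : Disjoint (Finset.range g) (Finset.Ico g M) := by
    simp [Finset.disjoint_left, Finset.mem_range, Finset.mem_Ico]
    intro a ha h2; omega
  have key : (s1 i : ℤ) - s i ≤ g := by
    have e1 : ∀ j ∈ Finset.range g, (s (j+1) : ℤ) - s1 (j+1) = 1 := by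
      intro j hj
      have := h.2 (j + 1) (by simp at hj; omega)
      rw [this]; push_cast; ring
    have e2 : ∀ j ∈ Finset.Ico g M, (s (j+1) : ℤ) - s1 (j+1) ≤ 0 := by
      intro j hj
      have : s (j+1) ≤ s1 (j+1) := hgt (j+1) (by simp [Finset.mem_Ico] at hj; omega)
      omega
    have hi1 : i - 1 ∈ Finset.Ico g M := by simp [Finset.mem_Ico]; omega
    have hdiff : (0:ℤ) ≤ ∑ j ∈ Finset.range M, ((s (j+1) : ℤ) - s1 (j+1)) := by
      rw [Finset.sum_sub_distrib]; omega
    rw [hsplit, Finset.sum_union hdisj] at hdiff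
    have hA : ∑ j ∈ Finset.range g, ((s (j+1) : ℤ) - s1 (j+1)) = g := by
      rw [Finset.sum_congr rfl e1]; simp
    have hB : ∑ j ∈ Finset.Ico g M, ((s (j+1) : ℤ) - s1 (j+1))
        ≤ (s (i-1+1) : ℤ) - s1 (i-1+1) := by
      rw [← Finset.add_sum_erase _ _ hi1]
      have : ∑ j ∈ (Finset.Ico g M).erase (i-1), ((s (j+1) : ℤ) - s1 (j+1)) ≤ 0 :=
        Finset.sum_nonpos (fun j hj => e2 j (Finset.mem_of_mem_erase hj))
      omega
    have hii : i - 1 + 1 = i := by omega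
    rw [hii] at hB
    omega
  -- (i+1) * s1 i ≤ psum s1
  have hNbound : (i + 1) * s1 i ≤ psum s1 := by
    rw [hp1]
    calc (i+1) * s1 i = ∑ _j ∈ Finset.range (i+1), s1 i := by simp [mul_comm]
    _ ≤ ∑ j ∈ Finset.range (i+1), s1 j := Finset.sum_le_sum (fun j hj => hmono1 j i (by simp at hj; omega))
    _ ≤ ∑ j ∈ Finset.range (M+1), s1 j := Finset.sum_le_sum_of_subset (by apply Finset.range_subset_range.mpr; omega)
  -- finish
  set d : ℕ := s1 i - s i with hd
  have hdg : d ≤ g := by omega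
  have hds : d ≤ s1 i := by omega
  have hsqd : d + 1 ≤ Nat.sqrt (psum s1 + 1) := by
    apply Nat.le_sqrt.mpr
    nlinarith [hdg, hds, hNbound, hig]
  have : (d : ℤ) = (s1 i : ℤ) - s i := by omega
  have h2 : ((d:ℕ) + 1 : ℤ) ≤ (Nat.sqrt (psum s1 + 1) : ℤ) := by exact_mod_cast hsqd
  push_cast at h2
  omega
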